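/- Let n₁,…,n_r be positive integers. A pairing of [n₁+⋯+n_r] belongs to NC₂(n₁⊗⋯⊗n_r) if and only if it equals a composition τ_{p_{r−1}}∘⋯∘τ_{p₁} of partial pairings for some natural numbers p₁,…,p_{r−1} satisfying: 0 ≤ p₁ ≤ min{n₁,n₂}; 0 ≤ p_k ≤ min{n_{k+1}, n₁+⋯+n_k − 2(p₁+⋯+p_{k−1})} for 2 ≤ k ≤ r−1; and 2(p₁+⋯+p_{r−1}) = n₁+⋯+n_r. -/

import Mathlib

set_option linter.unusedSectionVars false
set_option maxHeartbeats 1000000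




/-- A pairing (perfect matching) of `{0,…,N-1}`, encoded as a fixed-point-free involution;
the blocks of the pairing are the sets `{i, pair i}`. -/
structure Pairing (N : ℕ) where
  pair : Fin N → Fin N
  involutive : ∀ i, pair (pair i) = i
  fixedFree : ∀ i, pair i ≠ i

/-- A pairing is noncrossing if there are no indices `i < j < pair i < pair j`. -/
def Pairing.IsNoncrossing {N : ℕ} (P : Pairing N) : Prop :=
  ¬ ∃ i j : Fin N, i < j ∧ j < P.pair i ∧ P.pair i < P.pair j

/-- Start index (0-based) of the `i`-th block of the interval partition given by `nn`. -/
def blockStartL (nn : List ℕ) (i : ℕ) : ℕ := (nn.take i).sum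

/-- `j` (0-based) lies in the `i`-th block of the interval partition given by `nn`. -/
def inBlockL (nn : List ℕ) (i j : ℕ) : Prop :=
  i < nn.length ∧ blockStartL nn i ≤ j ∧ j < blockStartL nn i + nn.getD i 0

/-- The pairing respects the interval partition: no block of the pairing contains two
elements of the same interval block. -/
def RespectsL (nn : List ℕ) {N : ℕ} (P : Pairing N) : Prop :=
  ∀ j : Fin N, ∀ i : ℕ, inBlockL nn i (j : ℕ) → ¬ inBlockL nn i ((P.pair j : ℕ))

/-- One step of the action of the partial pairing `τ_p`.  The state consists of the list `L` of
currently unpaired indices (in the order of the merged first block), the list of pairs produced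
so far, and the start position of the next block.  The step takes the next block (of size `mp.1`)
and pairs its first `mp.2` elements with the last `mp.2` elements of `L` in nested fashion. -/
def tauStep (st : List ℕ × List (ℕ × ℕ) × ℕ) (mp : ℕ × ℕ) : List ℕ × List (ℕ × ℕ) × ℕ :=
  (st.1.take (st.1.length - mp.2) ++ (List.range' st.2.2 mp.1).drop mp.2,
   st.2.1 ++ (st.1.drop (st.1.length - mp.2)).reverse.zip ((List.range' st.2.2 mp.1).take mp.2),
   st.2.2 + mp.1)

/-- Run the composition `τ_{p_{r-1}} ∘ ⋯ ∘ τ_{p_1}`, where the first block has size `n0` and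
`steps` is the list of pairs `(n_{k+1}, p_k)`. -/
def tauRun (n0 : ℕ) (steps : List (ℕ × ℕ)) : List ℕ × List (ℕ × ℕ) × ℕ :=
  steps.foldl tauStep (List.range n0, [], n0)

/-- The composition of partial pairings is defined: at each step, `p_k` is at most the minimum
of the sizes of the two blocks it acts on. -/
def tauDefinedAux : ℕ → List (ℕ × ℕ) → Prop
  | _, [] => True
  | len, (m, p) :: rest => p ≤ len ∧ p ≤ m ∧ tauDefinedAux (len - p + (m - p)) rest

/-- The pairing determined by the composition of partial pairings equals `P`. -/
def TauEqualsPairing (n0 : ℕ) (steps : List (ℕ × ℕ)) {N : ℕ} (P : Pairing N) : Prop :=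
  ∀ i : Fin N, ((i : ℕ), (P.pair i : ℕ)) ∈ (tauRun n0 steps).2.1 ∨
    ((P.pair i : ℕ), (i : ℕ)) ∈ (tauRun n0 steps).2.1



lemma range'_split (s m p : ℕ) (h : p ≤ m) :
    List.range' s m = List.range' s p ++ List.range' (s + p) (m - p) := by
  have := List.range'_append (s := s) (m := p) (n := m - p) (step := 1)
  simp only [one_mul, Nat.mul_one] at this
  rw [Nat.add_sub_of_le h] at this
  rw [← this]

lemma take_range' (s m p : ℕ) (h : p ≤ m) :
    (List.range' s m).take p = List.range' s p := by
  rw [range'_split s m p h, List.take_append_of_le_length (by simp),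
    List.take_of_length_le (by simp)]

lemma drop_range' (s m p : ℕ) (h : p ≤ m) :
    (List.range' s m).drop p = List.range' (s + p) (m - p) := by
  rw [range'_split s m p h, List.drop_append_of_le_length (by simp)]
  simp

lemma sorted_lt_nodup {L : List ℕ} (h : L.Pairwise (· < ·)) : L.Nodup :=
  h.imp (fun hab => Nat.ne_of_lt hab)

lemma sorted_eq_of_mem_iff {L R : List ℕ} (hL : L.Pairwise (· < ·)) (hR : R.Pairwise (· < ·))
    (h : ∀ x, x ∈ L ↔ x ∈ R) : L = R := by
  refine List.Perm.eq_of_pairwise (fun a b _ _ h1 h2 => absurd (lt_trans h1 h2) (lt_irrefl a)) hL hR (List.Subperm.antisymm ?_ ?_)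
  · exact List.subperm_of_subset (sorted_lt_nodup hL) (fun x hx => (h x).1 hx)
  · exact List.subperm_of_subset (sorted_lt_nodup hR) (fun x hx => (h x).2 hx)

lemma mem_drop_sorted {L : List ℕ} (hL : L.Pairwise (· < ·)) (p : ℕ) (x : ℕ) :
    x ∈ L.drop (L.length - p) ↔ x ∈ L ∧ (L.filter (fun l => x < l)).length < p := by
  induction L with
  | nil => simp
  | cons a T ih =>
    have haT : ∀ y ∈ T, a < y := fun y hy => List.rel_of_pairwise_cons hL hy
    have hT : T.Pairwise (· < ·) := hL.of_cons
    by_cases hp : T.length + 1 ≤ p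
    · rw [List.length_cons, Nat.sub_eq_zero_of_le hp, List.drop_zero]
      constructor
      · intro hx
        refine ⟨hx, lt_of_lt_of_le ?_ hp⟩
        rw [show T.length + 1 = (a :: T).length from rfl]
        rw [List.length_filter_lt_length_iff_exists]
        exact ⟨x, hx, by simp⟩
      · exact fun h => h.1
    · push_neg at hp
      have hp' : p ≤ T.length := by omega
      have hdrop : (a :: T).drop ((a :: T).length - p) = T.drop (T.length - p) := by
        rw [List.length_cons, show T.length + 1 - p = (T.length - p) + 1 by omega]
        rfl
      rw [hdrop, ih hT]
      by_cases hxa : x = a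
      · subst hxa
        have hnT : x ∉ T := fun h => lt_irrefl x (haT x h)
        have : (List.filter (fun l => decide (x < l)) (x :: T)).length = T.length := by
          rw [List.filter_cons, if_neg (by simp)]
          rw [List.length_filter_eq_length_iff.2 (fun y hy => by simp [haT y hy])]
        simp only [this]
        constructor
        · intro ⟨h1, _⟩; exact absurd h1 hnT
        · intro ⟨_, h2⟩; omega
      · rcases lt_or_ge x a with hlt | hle
        · have hnx : x ∉ T := fun h => absurd (haT x h) (by omega)
          have hnx2 : x ∉ (a :: T) := by simp [hxa, hnx]
          constructor
          · intro ⟨h1, _⟩; exact absurd h1 hnx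
          · intro ⟨h1, _⟩; exact absurd h1 hnx2
        · have hfa : (a :: T).filter (fun l => x < l) = T.filter (fun l => x < l) := by
            rw [List.filter_cons, if_neg (by simp; omega)]
          rw [hfa]
          simp only [List.mem_cons]
          tauto

lemma sum_take_le (l : List ℕ) (n : ℕ) : (l.take n).sum ≤ l.sum := by
  conv_rhs => rw [← List.take_append_drop n l]
  rw [List.sum_append]
  omega

lemma bS_mono (nn : List ℕ) {i j : ℕ} (h : i ≤ j) : blockStartL nn i ≤ blockStartL nn j := by
  unfold blockStartL
  have : List.take i nn = List.take i (List.take j nn) := by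
    rw [List.take_take, Nat.min_eq_left h]
  rw [this]
  exact sum_take_le _ _

lemma bS_succ (nn : List ℕ) {k : ℕ} (h : k < nn.length) :
    blockStartL nn (k + 1) = blockStartL nn k + nn.getD k 0 := by
  unfold blockStartL
  rw [List.sum_take_succ nn k h, List.getD_eq_getElem nn 0 h]

lemma bS_le_sum (nn : List ℕ) (i : ℕ) : blockStartL nn i ≤ nn.sum := sum_take_le _ _

lemma inBlock_iff (nn : List ℕ) {i : ℕ} (h : i < nn.length) (j : ℕ) :
    inBlockL nn i j ↔ blockStartL nn i ≤ j ∧ j < blockStartL nn (i + 1) := by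
  rw [bS_succ nn h]
  exact ⟨fun ⟨_, h2, h3⟩ => ⟨h2, h3⟩, fun ⟨h2, h3⟩ => ⟨h, h2, h3⟩⟩

lemma block_disjoint {nn : List ℕ} {i a b S : ℕ} (k : ℕ) (hS : S = blockStartL nn (k + 1))
    (ha : inBlockL nn i a) (hb : inBlockL nn i b) (haS : a < S) (hbS : S ≤ b) : False := by
  have hi := ha.1
  have ha2 := (inBlock_iff nn hi a).1 ha
  have hb2 := (inBlock_iff nn hi b).1 hb
  rcases le_or_gt (i + 1) (k + 1) with hik | hik
  · have := bS_mono nn hik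
    omega
  · have := bS_mono nn (show k + 1 ≤ i from by omega)
    omega

/-- every index below the total sum lies in some block -/
lemma exists_block {nn : List ℕ} {x : ℕ} (hx : x < nn.sum) : ∃ i, inBlockL nn i x := by
  induction nn generalizing x with
  | nil => simp at hx
  | cons a t ih =>
    rcases lt_or_ge x a with h | h
    · exact ⟨0, by simp [inBlockL, blockStartL], by simpa [inBlockL, blockStartL] using h⟩
    · have hx' : x - a < t.sum := by simp at hx; omega
      obtain ⟨i, hi1, hi2, hi3⟩ := ih hx'
      refine ⟨i + 1, by simpa using hi1, ?_, ?_⟩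
      · simp only [blockStartL, List.take_succ_cons, List.sum_cons] at *
        omega
      · simp only [blockStartL, List.take_succ_cons, List.sum_cons, List.getD_cons_succ] at *
        omega

/-- downward-closed counting -/
lemma dc_count {m : ℕ} (Q : ℕ → Prop) [DecidablePred Q]
    (hdc : ∀ t t', t' ≤ t → t < m → Q t → Q t') :
    ∀ t < m, (Q t ↔ t < ((Finset.range m).filter (fun t => Q t)).card) := by
  set S := (Finset.range m).filter (fun t => Q t) with hSdef
  intro t ht
  constructor
  · intro hQ
    have hsub : Finset.range (t + 1) ⊆ S := by
      intro x hx
      simp only [Finset.mem_range] at hx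
      simp only [hSdef, Finset.mem_filter, Finset.mem_range]
      exact ⟨by omega, hdc t x (by omega) ht hQ⟩
    have := Finset.card_le_card hsub
    simpa using this
  · intro hcard
    by_contra hQ
    have hsub : S ⊆ Finset.range t := by
      intro x hx
      simp only [hSdef, Finset.mem_filter, Finset.mem_range] at hx
      simp only [Finset.mem_range]
      by_contra hxt
      exact hQ (hdc x t (by omega) hx.1 hx.2)
    have := Finset.card_le_card hsub
    simp only [Finset.card_range] at this
    omega

lemma zip_mem_iff {L : List ℕ} {s m p : ℕ} (hpL : p ≤ L.length) (hpm : p ≤ m) (z : ℕ × ℕ) :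
    z ∈ (L.drop (L.length - p)).reverse.zip ((List.range' s m).take p) ↔
    ∃ (t : ℕ) (ht : t < p), z = (L[L.length - 1 - t]'(by omega), s + t) := by
  rw [take_range' s m p hpm]
  have hD : (L.drop (L.length - p)).length = p := by
    rw [List.length_drop]; omega
  have hZlen : ((L.drop (L.length - p)).reverse.zip (List.range' s p)).length = p := by
    simp [hD]
  rw [List.mem_iff_getElem]
  constructor
  · rintro ⟨n, hn, rfl⟩
    rw [hZlen] at hn
    refine ⟨n, hn, ?_⟩
    rw [List.getElem_zip, List.getElem_reverse, List.getElem_drop, List.getElem_range']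
    have h1 : L.length - p + ((L.drop (L.length - p)).length - 1 - n) = L.length - 1 - n := by
      rw [hD]; omega
    simp only [h1, one_mul]
  · rintro ⟨t, ht, rfl⟩
    refine ⟨t, by omega, ?_⟩
    rw [List.getElem_zip, List.getElem_reverse, List.getElem_drop, List.getElem_range']
    have h1 : L.length - p + ((L.drop (L.length - p)).length - 1 - t) = L.length - 1 - t := by
      rw [hD]; omega
    simp only [h1, one_mul]

def cntP (pv : ℕ → ℕ) (s m : ℕ) : ℕ := ((Finset.range m).filter (fun t => pv (s + t) < s)).card

lemma fwd_count (pv : ℕ → ℕ) (N s m : ℕ)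
    (hsm : s + m ≤ N)
    (hinv : ∀ x, x < N → pv (pv x) = x)
    (hnc : ∀ x y, x < N → y < N → x < y → y < pv x → pv x < pv y → False)
    (hblock : ∀ x, s ≤ x → x < s + m → ¬ (s ≤ pv x ∧ pv x < s + m)) :
    ∀ t, t < m → (pv (s + t) < s ↔ t < cntP pv s m) := by
  have hdc : ∀ t t', t' ≤ t → t < m → pv (s + t) < s → pv (s + t') < s := by
    intro t t' ht' htm hQ
    rcases Nat.eq_or_lt_of_le ht' with rfl | ht'
    · exact hQ
    by_contra hne
    push_neg at hne
    have hblk := hblock (s + t') (by omega) (by omega)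
    have h2 : s + m ≤ pv (s + t') := by
      rcases Nat.lt_or_ge (pv (s + t')) (s + m) with h | h
      · exact absurd ⟨hne, h⟩ hblk
      · exact h
    refine hnc (pv (s + t)) (s + t') (by omega) (by omega) (by omega) ?_ ?_
    · rw [hinv (s + t) (by omega)]; omega
    · rw [hinv (s + t) (by omega)]; omega
  exact dc_count _ hdc

def FL (pv : ℕ → ℕ) (s : ℕ) : List ℕ := (List.range s).filter (fun j => s ≤ pv j)

lemma FL_sorted (pv : ℕ → ℕ) (s : ℕ) : (FL pv s).Pairwise (· < ·) :=
  (List.pairwise_lt_range (n := s)).filter _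

lemma FL_mem (pv : ℕ → ℕ) (s : ℕ) (x : ℕ) : x ∈ FL pv s ↔ x < s ∧ s ≤ pv x := by
  simp [FL, List.mem_filter]

section FwdCore

variable (pv : ℕ → ℕ) (N s m : ℕ)
    (hsm : s + m ≤ N)
    (hinv : ∀ x, x < N → pv (pv x) = x)
    (hnc : ∀ x y, x < N → y < N → x < y → y < pv x → pv x < pv y → False)
    (hblock : ∀ x, s ≤ x → x < s + m → ¬ (s ≤ pv x ∧ pv x < s + m))

include hsm hinv hnc hblock

lemma fwd_p_le_m : cntP pv s m ≤ m := by
  have := Finset.card_filter_le (Finset.range m) (fun t => pv (s + t) < s)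
  simpa [cntP] using this

lemma fwd_partner_mem : ∀ t, t < cntP pv s m → pv (s + t) ∈ FL pv s := by
  intro t ht
  have htm : t < m := lt_of_lt_of_le ht (fwd_p_le_m pv N s m hsm hinv hnc hblock)
  have h1 : pv (s + t) < s := (fwd_count pv N s m hsm hinv hnc hblock t htm).2 ht
  rw [FL_mem]
  refine ⟨h1, ?_⟩
  rw [hinv (s + t) (by omega)]
  omega

lemma fwd_anti : ∀ t t', t < t' → t' < cntP pv s m → pv (s + t') < pv (s + t) := by
  intro t t' htt' ht'
  have hp := fwd_p_le_m pv N s m hsm hinv hnc hblock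
  have h1 : pv (s + t) < s := (fwd_count pv N s m hsm hinv hnc hblock t (by omega)).2 (by omega)
  have h2 : pv (s + t') < s := (fwd_count pv N s m hsm hinv hnc hblock t' (by omega)).2 ht'
  rcases lt_trichotomy (pv (s + t')) (pv (s + t)) with h | h | h
  · exact h
  · exfalso
    have := congrArg pv h
    rw [hinv (s + t) (by omega), hinv (s + t') (by omega)] at this
    omega
  · exfalso
    refine hnc (pv (s + t)) (pv (s + t')) (by omega) (by omega) h ?_ ?_
    · rw [hinv (s + t) (by omega)]; omega
    · rw [hinv (s + t) (by omega), hinv (s + t') (by omega)]; omega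

lemma fwd_gt : ∀ l ∈ FL pv s, ∀ t, t < cntP pv s m → pv (s + t) < l →
    ∃ t', t' < t ∧ l = pv (s + t') := by
  intro l hl t ht hlt
  have hp := fwd_p_le_m pv N s m hsm hinv hnc hblock
  rw [FL_mem] at hl
  obtain ⟨hls, hlpv⟩ := hl
  have hlN : l < N := by omega
  have h1 : pv (s + t) < s := (fwd_count pv N s m hsm hinv hnc hblock t (by omega)).2 (by omega)
  have hple : pv l ≤ s + t := by
    by_contra hgt
    push_neg at hgt
    refine hnc (pv (s + t)) l (by omega) hlN hlt ?_ ?_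
    · rw [hinv (s + t) (by omega)]; omega
    · rw [hinv (s + t) (by omega)]; omega
  have hne : pv l ≠ s + t := by
    intro he
    have := congrArg pv he
    rw [hinv l hlN] at this
    omega
  refine ⟨pv l - s, by omega, ?_⟩
  rw [show s + (pv l - s) = pv l by omega, hinv l hlN]

/-- the "R" list of partners in increasing order -/
lemma fwd_drop_iff_R : ∀ x, x ∈ (FL pv s).drop ((FL pv s).length - cntP pv s m) ↔
    ∃ t, t < cntP pv s m ∧ x = pv (s + t) := by
  set p := cntP pv s m with hp
  set L := FL pv s with hLdef
  have hLs : L.Pairwise (· < ·) := FL_sorted pv s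
  have hLnodup : L.Nodup := sorted_lt_nodup hLs
  intro x
  rw [mem_drop_sorted hLs]
  constructor
  · rintro ⟨hxL, hflt⟩
    by_contra hxR
    push_neg at hxR
    rcases Nat.eq_zero_or_pos p with hp0 | hp0
    · omega
    have hxlt : ∀ t, t < p → x < pv (s + t) := by
      intro t ht
      rcases lt_trichotomy x (pv (s + t)) with h | h | h
      · exact h
      · exact (hxR t ht) h |>.elim
      · obtain ⟨t', ht', he⟩ := fwd_gt pv N s m hsm hinv hnc hblock x hxL t ht h
        exact absurd he (hxR t' (by omega))
    have hsub : (List.range p).map (fun u => pv (s + u)) ⊆ L.filter (fun l => x < l) := by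
      intro y hy
      simp only [List.mem_map, List.mem_range] at hy
      obtain ⟨u, hu, rfl⟩ := hy
      rw [List.mem_filter]
      exact ⟨fwd_partner_mem pv N s m hsm hinv hnc hblock u hu, by
        simpa using hxlt u hu⟩
    have hnd : ((List.range p).map (fun u => pv (s + u))).Nodup := by
      rw [List.nodup_iff_injective_getElem]
      intro ⟨a, ha⟩ ⟨b, hb⟩ hab
      have ha' : a < p := by simpa using ha
      have hb' : b < p := by simpa using hb
      simp only [List.getElem_map, List.getElem_range] at hab
      rcases lt_trichotomy a b with h | h | h
      · have := fwd_anti pv N s m hsm hinv hnc hblock a b h hb'; omega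
      · simpa using h
      · have := fwd_anti pv N s m hsm hinv hnc hblock b a h ha'; omega
    have := (List.subperm_of_subset hnd hsub).length_le
    simp only [List.length_map, List.length_range] at this
    omega
  · rintro ⟨t, ht, rfl⟩
    refine ⟨fwd_partner_mem pv N s m hsm hinv hnc hblock t ht, ?_⟩
    have hsub : L.filter (fun l => pv (s + t) < l) ⊆ (List.range t).map (fun u => pv (s + u)) := by
      intro y hy
      rw [List.mem_filter] at hy
      obtain ⟨hyL, hylt⟩ := hy
      obtain ⟨t', ht', rfl⟩ := fwd_gt pv N s m hsm hinv hnc hblock y hyL t ht (by simpa using hylt)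
      simp only [List.mem_map, List.mem_range]
      exact ⟨t', ht', rfl⟩
    have hndf : (L.filter (fun l => pv (s + t) < l)).Nodup := hLnodup.filter _
    have := (List.subperm_of_subset hndf hsub).length_le
    simp only [List.length_map, List.length_range] at this
    omega

lemma fwd_p_le_len : cntP pv s m ≤ (FL pv s).length := by
  set p := cntP pv s m with hp
  set L := FL pv s with hLdef
  have hsub : (List.range p).map (fun u => pv (s + u)) ⊆ L := by
    intro y hy
    simp only [List.mem_map, List.mem_range] at hy
    obtain ⟨u, hu, rfl⟩ := hy
    exact fwd_partner_mem pv N s m hsm hinv hnc hblock u hu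
  have hnd : ((List.range p).map (fun u => pv (s + u))).Nodup := by
    rw [List.nodup_iff_injective_getElem]
    intro ⟨a, ha⟩ ⟨b, hb⟩ hab
    have ha' : a < p := by simpa using ha
    have hb' : b < p := by simpa using hb
    simp only [List.getElem_map, List.getElem_range] at hab
    rcases lt_trichotomy a b with h | h | h
    · have := fwd_anti pv N s m hsm hinv hnc hblock a b h hb'; omega
    · simpa using h
    · have := fwd_anti pv N s m hsm hinv hnc hblock b a h ha'; omega
  have := (List.subperm_of_subset hnd hsub).length_le
  simpa using this

lemma fwd_drop_eq : (FL pv s).drop ((FL pv s).length - cntP pv s m) =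
    (List.range (cntP pv s m)).map (fun u => pv (s + (cntP pv s m - 1 - u))) := by
  set p := cntP pv s m with hp
  set L := FL pv s with hLdef
  have hLs : L.Pairwise (· < ·) := FL_sorted pv s
  refine sorted_eq_of_mem_iff (List.Pairwise.sublist (List.drop_sublist _ _) hLs) ?_ ?_
  · rw [List.pairwise_iff_getElem]
    intro i j hi hj hij
    simp only [List.length_map, List.length_range] at hi hj
    simp only [List.getElem_map, List.getElem_range]
    exact fwd_anti pv N s m hsm hinv hnc hblock (p - 1 - j) (p - 1 - i) (by omega) (by omega)
  · intro x
    rw [fwd_drop_iff_R pv N s m hsm hinv hnc hblock x]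
    simp only [List.mem_map, List.mem_range]
    constructor
    · rintro ⟨t, ht, rfl⟩
      exact ⟨p - 1 - t, by omega, by congr 1; omega⟩
    · rintro ⟨u, hu, rfl⟩
      exact ⟨p - 1 - u, by omega, rfl⟩

lemma fwd_getElem : ∀ t (ht : t < cntP pv s m),
    (FL pv s)[(FL pv s).length - 1 - t]'(by
      have := fwd_p_le_len pv N s m hsm hinv hnc hblock; omega) = pv (s + t) := by
  set p := cntP pv s m with hp
  set L := FL pv s with hLdef
  intro t ht
  have hplen := fwd_p_le_len pv N s m hsm hinv hnc hblock
  rw [← hp, ← hLdef] at hplen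
  have h2 : (L.drop (L.length - p))[p - 1 - t]'(by rw [List.length_drop]; omega) = pv (s + t) := by
    simp only [hp, hLdef, fwd_drop_eq pv N s m hsm hinv hnc hblock, List.getElem_map, List.getElem_range]
    congr 1
    omega
  simp only [List.getElem_drop] at h2
  have he : L.length - p + (p - 1 - t) = L.length - 1 - t := by omega
  simp only [he] at h2
  exact h2

lemma fwd_take_mem : ∀ x, x ∈ (FL pv s).take ((FL pv s).length - cntP pv s m) ↔
    x ∈ FL pv s ∧ ¬ (∃ t, t < cntP pv s m ∧ x = pv (s + t)) := by
  set p := cntP pv s m with hp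
  set L := FL pv s with hLdef
  intro x
  have hLnd : L.Nodup := sorted_lt_nodup (FL_sorted pv s)
  have hsplit := List.take_append_drop (L.length - p) L
  have hnd2 : (L.take (L.length - p) ++ L.drop (L.length - p)).Nodup := by rw [hsplit]; exact hLnd
  rw [List.nodup_append] at hnd2
  obtain ⟨-, -, hdisj⟩ := hnd2
  rw [← fwd_drop_iff_R pv N s m hsm hinv hnc hblock x]
  constructor
  · intro hx
    refine ⟨?_, fun hd => hdisj x hx x hd rfl⟩
    have := List.take_sublist (L.length - p) L
    exact this.mem hx
  · rintro ⟨hxL, hnd⟩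
    rw [← hsplit] at hxL
    rcases List.mem_append.1 hxL with h | h
    · exact h
    · exact absurd h hnd

lemma fwd_new_list : (FL pv s).take ((FL pv s).length - cntP pv s m) ++
      (List.range' s m).drop (cntP pv s m) = FL pv (s + m) := by
  set p := cntP pv s m with hp
  set L := FL pv s with hLdef
  have hpm := fwd_p_le_m pv N s m hsm hinv hnc hblock
  rw [← hp] at hpm
  have hcnt := fwd_count pv N s m hsm hinv hnc hblock
  refine sorted_eq_of_mem_iff ?_ (FL_sorted pv (s + m)) ?_
  · rw [List.pairwise_append]
    refine ⟨List.Pairwise.sublist (List.take_sublist _ _) (FL_sorted pv s), ?_, ?_⟩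
    · rw [drop_range' s m p hpm]
      exact List.pairwise_lt_range'
    · intro a ha b hb
      have haL : a ∈ L := (List.take_sublist _ _).mem ha
      rw [FL_mem] at haL
      rw [drop_range' s m p hpm, List.mem_range'_1] at hb
      omega
  · intro x
    rw [List.mem_append, fwd_take_mem pv N s m hsm hinv hnc hblock x,
      drop_range' s m p hpm, List.mem_range'_1, FL_mem, FL_mem]
    constructor
    · rintro (⟨⟨hxs, hxpv⟩, hnotp⟩ | ⟨h1, h2⟩)
      · -- x < s, pv x ≥ s, not a partner: show pv x ≥ s + m
        refine ⟨by omega, ?_⟩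
        by_contra hlt
        push_neg at hlt
        have ht : pv x - s < m := by omega
        have hQ : pv (s + (pv x - s)) < s := by
          rw [show s + (pv x - s) = pv x by omega, hinv x (by omega)]
          omega
        have htp : pv x - s < p := by rw [hp]; exact (hcnt _ ht).1 hQ
        exact hnotp ⟨pv x - s, htp, by
          rw [show s + (pv x - s) = pv x by omega, hinv x (by omega)]⟩
      · -- s + p ≤ x < s + m
        have ht : x - s < m := by omega
        have hnQ : ¬ (pv (s + (x - s)) < s) := by
          intro hQ
          have := (hcnt _ ht).1 hQ
          rw [← hp] at this
          omega
        rw [show s + (x - s) = x by omega] at hnQ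
        push_neg at hnQ
        have := hblock x (by omega) (by omega)
        refine ⟨by omega, by omega⟩
    · rintro ⟨hxm, hpvx⟩
      rcases lt_or_ge x s with hxs | hxs
      · left
        refine ⟨⟨hxs, by omega⟩, ?_⟩
        rintro ⟨t, htp, rfl⟩
        have htm : t < m := by omega
        have := (hcnt t htm).2 htp
        have := hinv (s + t) (by omega)
        omega
      · right
        refine ⟨?_, by omega⟩
        have ht : x - s < m := by omega
        by_contra hlt
        push_neg at hlt
        have htp : x - s < p := by omega
        have hQ : pv (s + (x - s)) < s := by
          rw [hp] at htp
          exact (hcnt _ ht).2 htp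
        rw [show s + (x - s) = x by omega] at hQ
        omega

lemma fwd_cov : ∀ x, x < s + m → pv x < s + m → ¬ (x < s ∧ pv x < s) →
    (x, pv x) ∈ ((FL pv s).drop ((FL pv s).length - cntP pv s m)).reverse.zip
        ((List.range' s m).take (cntP pv s m)) ∨
    (pv x, x) ∈ ((FL pv s).drop ((FL pv s).length - cntP pv s m)).reverse.zip
        ((List.range' s m).take (cntP pv s m)) := by
  set p := cntP pv s m with hp
  set L := FL pv s with hLdef
  have hpm := fwd_p_le_m pv N s m hsm hinv hnc hblock
  have hpL := fwd_p_le_len pv N s m hsm hinv hnc hblock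
  rw [← hp, ← hLdef] at hpL
  rw [← hp] at hpm
  have hcnt := fwd_count pv N s m hsm hinv hnc hblock
  have hget := fwd_getElem pv N s m hsm hinv hnc hblock
  intro x hx hpvx hnb
  rcases lt_or_ge x s with hxs | hxs
  · -- x < s, so pv x ∈ [s, s+m), pv x = s + t with t < p, x = partner
    have hpvs : s ≤ pv x := by omega
    have ht : pv x - s < m := by omega
    have hQ : pv (s + (pv x - s)) < s := by
      rw [show s + (pv x - s) = pv x by omega, hinv x (by omega)]; omega
    have htp : pv x - s < p := by rw [hp]; exact (hcnt _ ht).1 hQ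
    left
    rw [zip_mem_iff hpL hpm]
    refine ⟨pv x - s, htp, ?_⟩
    have := hget (pv x - s) (by rw [← hp]; exact htp)
    rw [show s + (pv x - s) = pv x by omega, hinv x (by omega)] at this
    rw [Prod.mk.injEq]
    constructor
    · exact this.symm
    · omega
  · -- s ≤ x < s + m: pv x < s
    have hpvs : pv x < s := by
      by_contra hge
      push_neg at hge
      exact hblock x hxs hx ⟨hge, hpvx⟩
    have ht : x - s < m := by omega
    have hQ : pv (s + (x - s)) < s := by rw [show s + (x - s) = x by omega]; exact hpvs
    have htp : x - s < p := by rw [hp]; exact (hcnt _ ht).1 hQ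
    right
    rw [zip_mem_iff hpL hpm]
    refine ⟨x - s, htp, ?_⟩
    have := hget (x - s) (by rw [← hp]; exact htp)
    rw [show s + (x - s) = x by omega] at this
    rw [Prod.mk.injEq]
    constructor
    · exact this.symm
    · omega

end FwdCore

def psOf (pv : ℕ → ℕ) (n0 : ℕ) (ns : List ℕ) : List ℕ :=
  (List.range ns.length).map (fun k => cntP pv (blockStartL (n0 :: ns) (k + 1)) (ns.getD k 0))

lemma psOf_length (pv : ℕ → ℕ) (n0 : ℕ) (ns : List ℕ) : (psOf pv n0 ns).length = ns.length := by
  simp [psOf]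

lemma psOf_getD (pv : ℕ → ℕ) (n0 : ℕ) (ns : List ℕ) {k : ℕ} (hk : k < ns.length) :
    (psOf pv n0 ns).getD k 0 = cntP pv (blockStartL (n0 :: ns) (k + 1)) (ns.getD k 0) := by
  rw [List.getD_eq_getElem _ _ (by simp [psOf, hk])]
  simp [psOf]

lemma bS_one (n0 : ℕ) (ns : List ℕ) : blockStartL (n0 :: ns) 1 = n0 := by
  simp [blockStartL]

lemma bS_cons_succ (n0 : ℕ) (ns : List ℕ) {k : ℕ} (hk : k < ns.length) :
    blockStartL (n0 :: ns) (k + 2) = blockStartL (n0 :: ns) (k + 1) + ns.getD k 0 := by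
  rw [bS_succ (n0 :: ns) (by simp; omega), List.getD_cons_succ]

lemma fwd_main (n0 : ℕ) (ns : List ℕ) (pv : ℕ → ℕ)
    (hinv : ∀ x, x < (n0 :: ns).sum → pv (pv x) = x)
    (hnc : ∀ x y, x < (n0 :: ns).sum → y < (n0 :: ns).sum →
      x < y → y < pv x → pv x < pv y → False)
    (hblockAll : ∀ k, k < (n0 :: ns).length → ∀ x, blockStartL (n0 :: ns) k ≤ x →
      x < blockStartL (n0 :: ns) (k + 1) →
      ¬ (blockStartL (n0 :: ns) k ≤ pv x ∧ pv x < blockStartL (n0 :: ns) (k + 1))) :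
    ∀ k, k ≤ ns.length →
      (List.foldl tauStep (List.range n0, [], n0) ((ns.zip (psOf pv n0 ns)).take k)).1
        = FL pv (blockStartL (n0 :: ns) (k + 1)) ∧
      (List.foldl tauStep (List.range n0, [], n0) ((ns.zip (psOf pv n0 ns)).take k)).2.2
        = blockStartL (n0 :: ns) (k + 1) ∧
      (FL pv (blockStartL (n0 :: ns) (k + 1))).length
        + 2 * (((psOf pv n0 ns).take k).sum) = blockStartL (n0 :: ns) (k + 1) ∧
      (∀ x, x < blockStartL (n0 :: ns) (k + 1) → pv x < blockStartL (n0 :: ns) (k + 1) →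
        ((x, pv x) ∈ (List.foldl tauStep (List.range n0, [], n0)
            ((ns.zip (psOf pv n0 ns)).take k)).2.1 ∨
         (pv x, x) ∈ (List.foldl tauStep (List.range n0, [], n0)
            ((ns.zip (psOf pv n0 ns)).take k)).2.1)) := by
  set N := (n0 :: ns).sum with hN
  set ps := psOf pv n0 ns with hps
  intro k
  induction k with
  | zero =>
    intro _
    rw [bS_one]
    have hFL : FL pv n0 = List.range n0 := by
      rw [FL, List.filter_eq_self]
      intro a ha
      rw [List.mem_range] at ha
      have := hblockAll 0 (by simp) a (by simp [blockStartL]) (by rwa [bS_one])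
      rw [bS_one] at this
      simp only [decide_eq_true_eq]
      simp [blockStartL] at this
      omega
    refine ⟨by simp [hFL], by simp, by simp [hFL], ?_⟩
    intro x hx hpx
    exfalso
    have := hblockAll 0 (by simp) x (by simp [blockStartL]) (by rwa [bS_one])
    rw [bS_one] at this
    simp [blockStartL] at this
    omega
  | succ k ih =>
    intro hk1
    have hk : k < ns.length := by omega
    obtain ⟨ih1, ih2, ih3, ih4⟩ := ih (by omega)
    set s := blockStartL (n0 :: ns) (k + 1) with hs
    set m := ns.getD k 0 with hm
    set p := cntP pv s m with hp
    have hsm2 : blockStartL (n0 :: ns) (k + 2) = s + m := bS_cons_succ n0 ns hk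
    have hsmN : s + m ≤ N := by
      rw [← hsm2, hN]
      exact bS_le_sum _ _
    have hblock : ∀ x, s ≤ x → x < s + m → ¬ (s ≤ pv x ∧ pv x < s + m) := by
      intro x h1 h2
      have hidx : k + 1 + 1 = k + 2 := rfl
      have := hblockAll (k + 1) (by simp; omega) x (by rwa [← hs])
        (by rw [hidx, hsm2]; omega)
      rw [hidx, hsm2] at this
      exact this
    -- the step list
    have hlenzip : (ns.zip ps).length = ns.length := by
      rw [List.length_zip, hps, psOf_length]
      omega
    have hstepk : (ns.zip ps)[k]'(by omega) = (m, p) := by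
      rw [List.getElem_zip]
      congr 1
      · rw [hm, List.getD_eq_getElem _ _ hk]
      · show (psOf pv n0 ns)[k]'(by rw [psOf_length]; exact hk)
            = cntP pv (blockStartL (n0 :: ns) (k + 1)) (ns.getD k 0)
        simp [psOf]
    have htake : (ns.zip ps).take (k + 1) = (ns.zip ps).take k ++ [(m, p)] := by
      rw [List.take_succ, List.getElem?_eq_getElem (by omega), hstepk]
      rfl
    rw [htake, List.foldl_append]
    set st := List.foldl tauStep (List.range n0, [], n0) ((ns.zip ps).take k) with hst
    have hstep : List.foldl tauStep st [(m, p)] = tauStep st (m, p) := rfl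
    rw [hstep]
    have ht1 : (tauStep st (m, p)).1 = (FL pv s).take ((FL pv s).length - p)
        ++ (List.range' s m).drop p := by
      simp only [tauStep, ih1, ih2]
    have ht2 : (tauStep st (m, p)).2.2 = s + m := by
      simp only [tauStep, ih2]
    have ht3 : (tauStep st (m, p)).2.1 = st.2.1 ++
        ((FL pv s).drop ((FL pv s).length - p)).reverse.zip ((List.range' s m).take p) := by
      simp only [tauStep, ih1, ih2]
    have hnew := fwd_new_list pv N s m hsmN hinv hnc hblock
    rw [← hp] at hnew
    have hplen := fwd_p_le_len pv N s m hsmN hinv hnc hblock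
    have hpm := fwd_p_le_m pv N s m hsmN hinv hnc hblock
    rw [← hp] at hplen hpm
    refine ⟨?_, ?_, ?_, ?_⟩
    · rw [ht1, hnew, hsm2]
    · rw [ht2, hsm2]
    · rw [hsm2]
      have hlen : (FL pv (s + m)).length = ((FL pv s).length - p) + (m - p) := by
        rw [← hnew]
        simp only [List.length_append, List.length_take, List.length_drop]
        have : (List.range' s m).length = m := by simp
        rw [this]
        omega
      have hsum : (ps.take (k + 1)).sum = (ps.take k).sum + p := by
        rw [List.sum_take_succ _ _ (by rw [hps, psOf_length]; exact hk)]
        congr 1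
        show (psOf pv n0 ns)[k]'(by rw [psOf_length]; exact hk)
            = cntP pv (blockStartL (n0 :: ns) (k + 1)) (ns.getD k 0)
        simp [psOf]
      rw [hlen, hsum]
      omega
    · intro x hx hpx
      rw [hsm2] at hx hpx
      rw [ht3]
      by_cases hold : x < s ∧ pv x < s
      · rcases ih4 x hold.1 hold.2 with h | h
        · exact Or.inl (List.mem_append_left _ h)
        · exact Or.inr (List.mem_append_left _ h)
      · rcases fwd_cov pv N s m hsmN hinv hnc hblock x hx hpx hold with h | h
        · exact Or.inl (List.mem_append_right _ (by rw [← hp] at h; exact h))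
        · exact Or.inr (List.mem_append_right _ (by rw [← hp] at h; exact h))

lemma bS_cons (n0 : ℕ) (ns : List ℕ) (k : ℕ) :
    blockStartL (n0 :: ns) (k + 1) = n0 + (ns.take k).sum := by
  simp [blockStartL, List.take_succ_cons]

lemma bwd_main (n0 : ℕ) (ns ps : List ℕ) (hlen : ps.length = ns.length)
    (hcond : ∀ k, k < ps.length → ps.getD k 0 ≤ ns.getD k 0 ∧
      ps.getD k 0 + 2 * (ps.take k).sum ≤ n0 + (ns.take k).sum) :
    ∀ k, k ≤ ns.length →
      (List.foldl tauStep (List.range n0, [], n0) ((ns.zip ps).take k)).2.2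
        = blockStartL (n0 :: ns) (k + 1) ∧
      (List.foldl tauStep (List.range n0, [], n0) ((ns.zip ps).take k)).1.Pairwise (· < ·) ∧
      (∀ l ∈ (List.foldl tauStep (List.range n0, [], n0) ((ns.zip ps).take k)).1,
        l < blockStartL (n0 :: ns) (k + 1)) ∧
      (List.foldl tauStep (List.range n0, [], n0) ((ns.zip ps).take k)).1.length
        + 2 * (ps.take k).sum = blockStartL (n0 :: ns) (k + 1) ∧
      (∀ ab ∈ (List.foldl tauStep (List.range n0, [], n0) ((ns.zip ps).take k)).2.1,
        ab.1 < ab.2 ∧ ab.2 < blockStartL (n0 :: ns) (k + 1)) ∧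
      (∀ ab ∈ (List.foldl tauStep (List.range n0, [], n0) ((ns.zip ps).take k)).2.1,
        ∀ i, inBlockL (n0 :: ns) i ab.1 → ¬ inBlockL (n0 :: ns) i ab.2) ∧
      (∀ ab ∈ (List.foldl tauStep (List.range n0, [], n0) ((ns.zip ps).take k)).2.1,
        ∀ cd ∈ (List.foldl tauStep (List.range n0, [], n0) ((ns.zip ps).take k)).2.1,
        ¬ (ab.1 < cd.1 ∧ cd.1 < ab.2 ∧ ab.2 < cd.2)) ∧
      (∀ ab ∈ (List.foldl tauStep (List.range n0, [], n0) ((ns.zip ps).take k)).2.1,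
        ∀ l ∈ (List.foldl tauStep (List.range n0, [], n0) ((ns.zip ps).take k)).1,
        ¬ (ab.1 < l ∧ l < ab.2)) := by
  intro k
  induction k with
  | zero =>
    intro _
    rw [bS_one]
    refine ⟨rfl, ?_, ?_, by simp, by simp, by simp, by simp, by simp⟩
    · exact List.pairwise_lt_range (n := n0)
    · intro l hl
      simpa [List.mem_range] using hl
  | succ k ih =>
    intro hk1
    have hk : k < ns.length := by omega
    obtain ⟨ih1, ih2, ih3, ih4, ih5, ih6, ih7, ih8⟩ := ih (by omega)
    set s := blockStartL (n0 :: ns) (k + 1) with hs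
    set m := ns.getD k 0 with hm
    set p := ps.getD k 0 with hp
    set st := List.foldl tauStep (List.range n0, [], n0) ((ns.zip ps).take k) with hst
    set L := st.1 with hL
    have ht1 : (tauStep st (m, p)).1 = L.take (L.length - p) ++ (List.range' st.2.2 m).drop p :=
      rfl
    have ht2 : (tauStep st (m, p)).2.2 = st.2.2 + m := rfl
    have ht3 : (tauStep st (m, p)).2.1 = st.2.1 ++
        (L.drop (L.length - p)).reverse.zip ((List.range' st.2.2 m).take p) := rfl
    clear_value st L
    have hsm2 : blockStartL (n0 :: ns) (k + 2) = s + m := bS_cons_succ n0 ns hk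
    obtain ⟨hpm, hptot⟩ := hcond k (by omega)
    rw [← hp, ← hm] at hpm
    rw [← hp] at hptot
    have hbSc : blockStartL (n0 :: ns) (k + 1) = n0 + (ns.take k).sum := bS_cons n0 ns k
    have hpL : p ≤ L.length := by omega
    -- step list
    have hlenzip : (ns.zip ps).length = ns.length := by
      rw [List.length_zip, hlen]; omega
    have hstepk : (ns.zip ps)[k]'(by omega) = (m, p) := by
      rw [List.getElem_zip]
      congr 1
      · rw [hm, List.getD_eq_getElem _ _ hk]
      · rw [hp, List.getD_eq_getElem ps 0 (show k < ps.length by omega)]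
    have htake : (ns.zip ps).take (k + 1) = (ns.zip ps).take k ++ [(m, p)] := by
      rw [List.take_succ, List.getElem?_eq_getElem (by omega), hstepk]
      rfl
    rw [htake, List.foldl_append, ← hst]
    have hstep : List.foldl tauStep st [(m, p)] = tauStep st (m, p) := rfl
    rw [hstep]
    rw [ih1] at ht1 ht2 ht3
    -- membership in the new pair batch
    have hnewmem : ∀ z : ℕ × ℕ, z ∈ (L.drop (L.length - p)).reverse.zip
        ((List.range' s m).take p) ↔
        ∃ (t : ℕ) (ht : t < p), z = (L[L.length - 1 - t]'(by omega), s + t) :=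
      fun z => zip_mem_iff hpL hpm z
    have hLget_mem : ∀ (t : ℕ) (htt : t < p), (L[L.length - 1 - t]'(by omega)) ∈ L := by
      intro t ht
      exact List.getElem_mem _
    have hLget_lt : ∀ (t : ℕ) (htt : t < p), (L[L.length - 1 - t]'(by omega)) < s := by
      intro t ht
      exact ih3 _ (hLget_mem t ht)
    have hsordget : ∀ (i j : ℕ) (hi : i < L.length) (hj : j < L.length), i < j → L[i] < L[j] :=
      fun i j hi hj hij => List.pairwise_iff_getElem.1 ih2 i j hi hj hij
    refine ⟨?_, ?_, ?_, ?_, ?_, ?_, ?_, ?_⟩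
    · rw [ht2, hsm2]
    · rw [ht1]
      rw [List.pairwise_append]
      refine ⟨List.Pairwise.sublist (List.take_sublist _ _) ih2, ?_, ?_⟩
      · rw [drop_range' s m p hpm]
        exact List.pairwise_lt_range'
      · intro a ha b hb
        have haL : a ∈ L := (List.take_sublist _ _).mem ha
        have := ih3 a haL
        rw [drop_range' s m p hpm, List.mem_range'_1] at hb
        omega
    · rw [ht1]
      intro l hl
      rw [hsm2]
      rcases List.mem_append.1 hl with h | h
      · have : l ∈ L := (List.take_sublist _ _).mem h
        have := ih3 l this
        omega
      · rw [drop_range' s m p hpm, List.mem_range'_1] at h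
        omega
    · rw [ht1, hsm2]
      have hsum : (ps.take (k + 1)).sum = (ps.take k).sum + p := by
        rw [List.sum_take_succ _ _ (show k < ps.length by omega)]
        congr 1
        rw [hp, List.getD_eq_getElem ps 0 (show k < ps.length by omega)]
      rw [hsum]
      simp only [List.length_append, List.length_take, List.length_drop]
      have : (List.range' s m).length = m := by simp
      rw [this]
      omega
    · rw [ht3, hsm2]
      intro ab hab
      rcases List.mem_append.1 hab with h | h
      · have := ih5 ab h
        omega
      · obtain ⟨t, ht, rfl⟩ := (hnewmem ab).1 h
        have h1 := hLget_lt t ht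
        simp only
        omega
    · rw [ht3]
      intro ab hab i hia hib
      rcases List.mem_append.1 hab with h | h
      · exact ih6 ab h i hia hib
      · obtain ⟨t, ht, rfl⟩ := (hnewmem ab).1 h
        have h1 := hLget_lt t ht
        exact block_disjoint k hs hia hib (by simpa using h1) (by simp)
    · rw [ht3]
      intro ab hab cd hcd
      rcases List.mem_append.1 hab with h1 | h1 <;> rcases List.mem_append.1 hcd with h2 | h2
      · exact ih7 ab h1 cd h2
      · -- ab old, cd new
        obtain ⟨t, ht, rfl⟩ := (hnewmem cd).1 h2
        rintro ⟨ha, hb, hc⟩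
        exact ih8 ab h1 _ (hLget_mem t ht) ⟨ha, hb⟩
      · -- ab new, cd old
        obtain ⟨t, ht, rfl⟩ := (hnewmem ab).1 h1
        rintro ⟨ha, hb, hc⟩
        have := ih5 cd h2
        simp only at hb hc
        omega
      · obtain ⟨t, ht, rfl⟩ := (hnewmem ab).1 h1
        obtain ⟨u, hu, rfl⟩ := (hnewmem cd).1 h2
        rintro ⟨ha, hb, hc⟩
        simp only at ha hb hc
        have htu : t < u := by omega
        have := hsordget (L.length - 1 - u) (L.length - 1 - t) (by omega) (by omega) (by omega)
        omega
    · rw [ht1, ht3]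
      intro ab hab l hl
      rcases List.mem_append.1 hab with h1 | h1 <;> rcases List.mem_append.1 hl with h2 | h2
      · exact ih8 ab h1 l ((List.take_sublist _ _).mem h2)
      · rw [drop_range' s m p hpm, List.mem_range'_1] at h2
        have := ih5 ab h1
        omega
      · obtain ⟨t, ht, rfl⟩ := (hnewmem ab).1 h1
        rw [List.mem_iff_getElem] at h2
        obtain ⟨u, hu, rfl⟩ := h2
        have hu' : u < L.length - p := by
          simpa [List.length_take] using hu
        rw [List.getElem_take]
        have := hsordget u (L.length - 1 - t) (by omega) (by omega) (by omega)
        simp only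
        omega
      · obtain ⟨t, ht, rfl⟩ := (hnewmem ab).1 h1
        rw [drop_range' s m p hpm, List.mem_range'_1] at h2
        simp only
        omega

lemma bS_top (n0 : ℕ) (ns : List ℕ) :
    blockStartL (n0 :: ns) (ns.length + 1) = (n0 :: ns).sum := by
  unfold blockStartL
  rw [List.take_of_length_le (by simp)]


theorem stmt7 (n0 : ℕ) (ns : List ℕ) (hn0 : 1 ≤ n0) (hns : ∀ m ∈ ns, 1 ≤ m)
    (P : Pairing ((n0 :: ns).sum)) :
    (P.IsNoncrossing ∧ RespectsL (n0 :: ns) P) ↔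
      ∃ ps : List ℕ, ps.length = ns.length ∧
        (∀ k, k < ps.length →
          ps.getD k 0 ≤ ns.getD k 0 ∧
          ps.getD k 0 + 2 * (ps.take k).sum ≤ n0 + (ns.take k).sum) ∧
        2 * ps.sum = (n0 :: ns).sum ∧
        TauEqualsPairing n0 (ns.zip ps) P := by

  set pv : ℕ → ℕ := fun j => if h : j < ((n0 :: ns).sum) then ((P.pair ⟨j, h⟩ : Fin ((n0 :: ns).sum)) : ℕ) else j with hpv
  have hpv_eq : ∀ (i : Fin ((n0 :: ns).sum)), pv (i : ℕ) = ((P.pair i : Fin ((n0 :: ns).sum)) : ℕ) := by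
    intro i
    rw [hpv]
    simp only
    rw [dif_pos i.isLt]
  have hpvlt : ∀ x, x < ((n0 :: ns).sum) → pv x < ((n0 :: ns).sum) := by
    intro x hx
    rw [hpv]
    simp only
    rw [dif_pos hx]
    exact (P.pair ⟨x, hx⟩).isLt
  have hpvinv : ∀ x, x < ((n0 :: ns).sum) → pv (pv x) = x := by
    intro x hx
    have h1 : pv x = ((P.pair ⟨x, hx⟩ : Fin ((n0 :: ns).sum)) : ℕ) := hpv_eq ⟨x, hx⟩
    rw [h1, hpv_eq (P.pair ⟨x, hx⟩), P.involutive]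
  constructor
  · rintro ⟨hNC, hResp⟩
    have hnc : ∀ x y, x < ((n0 :: ns).sum) → y < ((n0 :: ns).sum) → x < y → y < pv x → pv x < pv y → False := by
      intro x y hx hy hxy hyx hxyp
      refine hNC ⟨⟨x, hx⟩, ⟨y, hy⟩, hxy, ?_, ?_⟩
      · show (⟨y, hy⟩ : Fin ((n0 :: ns).sum)) < P.pair ⟨x, hx⟩
        rw [Fin.lt_def]
        rw [hpv_eq ⟨x, hx⟩] at hyx
        exact hyx
      · rw [Fin.lt_def]
        rw [hpv_eq ⟨x, hx⟩, hpv_eq ⟨y, hy⟩] at hxyp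
        exact hxyp
    have hblockAll : ∀ k, k < (n0 :: ns).length → ∀ x, blockStartL (n0 :: ns) k ≤ x →
        x < blockStartL (n0 :: ns) (k + 1) →
        ¬ (blockStartL (n0 :: ns) k ≤ pv x ∧ pv x < blockStartL (n0 :: ns) (k + 1)) := by
      intro k hkl x h1 h2 hcon
      have hxN : x < ((n0 :: ns).sum) := lt_of_lt_of_le h2 (bS_le_sum _ _)
      have hin1 : inBlockL (n0 :: ns) k x := (inBlock_iff _ hkl x).2 ⟨h1, h2⟩
      have hin2 : inBlockL (n0 :: ns) k (pv x) := (inBlock_iff _ hkl (pv x)).2 ⟨hcon.1, hcon.2⟩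
      have := hResp ⟨x, hxN⟩ k (by simpa using hin1)
      rw [hpv_eq ⟨x, hxN⟩] at hin2
      exact this hin2
    have hmain := fwd_main n0 ns pv hpvinv hnc hblockAll
    set ps := psOf pv n0 ns with hps
    have hlenps : ps.length = ns.length := psOf_length pv n0 ns
    refine ⟨ps, hlenps, ?_, ?_, ?_⟩
    · intro k hk
      rw [hlenps] at hk
      obtain ⟨h1, h2, h3, h4⟩ := hmain k (by omega)
      set s := blockStartL (n0 :: ns) (k + 1) with hs
      set m := ns.getD k 0 with hm
      have hsm2 : blockStartL (n0 :: ns) (k + 2) = s + m := bS_cons_succ n0 ns hk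
      have hsmN : s + m ≤ ((n0 :: ns).sum) := by rw [← hsm2]; exact bS_le_sum _ _
      have hblock : ∀ x, s ≤ x → x < s + m → ¬ (s ≤ pv x ∧ pv x < s + m) := by
        intro x ha hb
        have hidx : k + 1 + 1 = k + 2 := rfl
        have := hblockAll (k + 1) (by simp; omega) x (by rwa [← hs])
          (by rw [hidx, hsm2]; omega)
        rw [hidx, hsm2] at this
        exact this
      have hgd := psOf_getD pv n0 ns hk
      rw [← hps, ← hs, ← hm] at hgd
      constructor
      · rw [hgd]
        exact fwd_p_le_m pv ((n0 :: ns).sum) s m hsmN hpvinv hnc hblock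
      · rw [hgd]
        have hle := fwd_p_le_len pv ((n0 :: ns).sum) s m hsmN hpvinv hnc hblock
        have hbsc := bS_cons n0 ns k
        rw [← hs] at hbsc
        omega
    · obtain ⟨h1, h2, h3, h4⟩ := hmain ns.length (le_refl _)
      have htop : blockStartL (n0 :: ns) (ns.length + 1) = ((n0 :: ns).sum) := bS_top n0 ns
      rw [htop] at h3
      have hFLN : FL pv ((n0 :: ns).sum) = [] := by
        rw [FL, List.filter_eq_nil_iff]
        intro a ha
        rw [List.mem_range] at ha
        have := hpvlt a ha
        simp only [decide_eq_true_eq]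
        omega
      rw [hFLN] at h3
      rw [List.take_of_length_le (by rw [hlenps])] at h3
      simpa using h3
    · intro i
      obtain ⟨h1, h2, h3, h4⟩ := hmain ns.length (le_refl _)
      have htop : blockStartL (n0 :: ns) (ns.length + 1) = ((n0 :: ns).sum) := bS_top n0 ns
      rw [htop] at h4
      have hzip : (ns.zip ps).take ns.length = ns.zip ps := by
        rw [List.take_of_length_le]
        rw [List.length_zip, hlenps]
        omega
      rw [hzip] at h4
      have := h4 (i : ℕ) i.isLt (by rw [hpv_eq i]; exact (P.pair i).isLt)
      rw [hpv_eq i] at this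
      exact this
  · rintro ⟨ps, hlen, hcond, hsum, hTau⟩
    have hmain := bwd_main n0 ns ps hlen (by
      intro k hk
      exact hcond k hk) ns.length (le_refl _)
    have hzip : (ns.zip ps).take ns.length = ns.zip ps := by
      rw [List.take_of_length_le]
      rw [List.length_zip, hlen]
      omega
    rw [hzip] at hmain
    obtain ⟨h1, h2, h3, h4, h5, h6, h7, h8⟩ := hmain
    set A := (List.foldl tauStep (List.range n0, [], n0) (ns.zip ps)).2.1 with hA
    have hTau' : ∀ i : Fin ((n0 :: ns).sum), ((i : ℕ), (P.pair i : ℕ)) ∈ A ∨ ((P.pair i : ℕ), (i : ℕ)) ∈ A :=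
      hTau
    have horient : ∀ i : Fin ((n0 :: ns).sum), (i : ℕ) < (P.pair i : ℕ) →
        ((i : ℕ), (P.pair i : ℕ)) ∈ A := by
      intro i hi
      rcases hTau' i with h | h
      · exact h
      · have := h5 _ h
        simp only at this
        omega
    constructor
    · rintro ⟨i, j, hij, hjPi, hPiPj⟩
      rw [Fin.lt_def] at hij hjPi hPiPj
      have hi : (i : ℕ) < (P.pair i : ℕ) := by omega
      have hj : (j : ℕ) < (P.pair j : ℕ) := by omega
      have m1 := horient i hi
      have m2 := horient j hj
      exact h7 _ m1 _ m2 ⟨hij, hjPi, hPiPj⟩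
    · intro j i hin1 hin2
      rcases lt_trichotomy ((j : ℕ)) ((P.pair j : ℕ)) with h | h | h
      · have m1 := horient j h
        exact h6 _ m1 i hin1 hin2
      · exact P.fixedFree j (Fin.ext h.symm)
      · have hlt : ((P.pair j : ℕ)) < ((P.pair (P.pair j) : ℕ)) := by
          rw [P.involutive]
          omega
        have m1 := horient (P.pair j) hlt
        rw [P.involutive] at m1
        exact h6 _ m1 i hin2 hin1
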